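/- Let b > 0 be a real constant and define ψ(α) = (cos α + b)/(cos α + sin α − 1). Then ψ is convex on the open interval (0, π/2). -/

import Mathlib

open Real

open Set in

lemma tan_convexOn : ConvexOn ℝ (Set.Ioo 0 (π/2)) Real.tan := by
  have hsub : Set.Ioo 0 (π/2) ⊆ {x : ℝ | Real.cos x ≠ 0} := by
    intro x hx
    exact (Real.cos_pos_of_mem_Ioo ⟨by linarith [hx.1, pi_pos], hx.2⟩).ne'
  apply convexOn_of_hasDerivWithinAt2_nonneg (f' := fun x => 1 / Real.cos x ^ 2)
    (f'' := fun x => 2 * Real.cos x * Real.sin x / (Real.cos x ^ 2) ^ 2)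
    (convex_Ioo _ _) (Real.continuousOn_tan.mono hsub)
  · intro x hx
    rw [interior_Ioo] at hx
    have hc : Real.cos x ≠ 0 := hsub hx
    exact (Real.hasDerivAt_tan hc).hasDerivWithinAt
  · intro x hx
    rw [interior_Ioo] at hx
    have hc : Real.cos x ≠ 0 := hsub hx
    have h1 : HasDerivAt (fun x => Real.cos x ^ 2) (2 * Real.cos x ^ 1 * (-Real.sin x)) x := by
      exact (Real.hasDerivAt_cos x).pow 2
    have h2 : HasDerivAt (fun y => (Real.cos y ^ 2)⁻¹)
        (-(2 * Real.cos x ^ 1 * -Real.sin x) / (Real.cos x ^ 2) ^ 2) x :=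
      (h1.inv (pow_ne_zero 2 hc))
    have h3 : HasDerivAt (fun x => 1 / Real.cos x ^ 2)
        (2 * Real.cos x * Real.sin x / (Real.cos x ^ 2) ^ 2) x := by
      simp only [one_div]
      convert h2 using 1
      field_simp
    exact h3.hasDerivWithinAt
  · intro x hx
    rw [interior_Ioo] at hx
    have hcpos : 0 < Real.cos x := Real.cos_pos_of_mem_Ioo ⟨by linarith [hx.1, pi_pos], hx.2⟩
    have hspos : 0 < Real.sin x := Real.sin_pos_of_pos_of_lt_pi hx.1 (by linarith [hx.2, pi_pos])
    positivity

lemma convexOn_tan_affine (m q : ℝ)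
    (h : ∀ x ∈ Set.Ioo (0:ℝ) (π/2), m*x+q ∈ Set.Ioo (0:ℝ) (π/2)) :
    ConvexOn ℝ (Set.Ioo 0 (π/2)) (fun x => Real.tan (m*x+q)) := by
  refine ⟨convex_Ioo _ _, fun x hx y hy a c ha hc hab => ?_⟩
  have key : m*(a•x+c•y)+q = a•(m*x+q)+c•(m*y+q) := by
    simp only [smul_eq_mul]; linear_combination (-q)*hab
  simp only []
  rw [key]
  exact tan_convexOn.2 (h x hx) (h y hy) ha hc hab

lemma psi_eq (b : ℝ) {α : ℝ} (hα : α ∈ Set.Ioo (0:ℝ) (π/2)) :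
    (Real.cos α + b) / (Real.cos α + Real.sin α - 1)
    = 1/2 + ((1+b)/2) * Real.tan (-(1/2)*α + π/2) + (b/2) * Real.tan ((1/2)*α + π/4) := by
  obtain ⟨hα1, hα2⟩ := hα
  set s := Real.sin (α/2) with hsdef
  set c := Real.cos (α/2) with hcdef
  have hpy : s^2 + c^2 = 1 := Real.sin_sq_add_cos_sq _
  have hs : 0 < s := Real.sin_pos_of_pos_of_lt_pi (by linarith) (by linarith [pi_pos])
  have hslt : s < Real.sqrt 2 / 2 := by
    have := Real.sin_lt_sin_of_lt_of_le_pi_div_two (x := α/2) (y := π/4)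
      (by linarith [pi_pos]) (by linarith [pi_pos]) (by linarith)
    rwa [Real.sin_pi_div_four] at this
  have hclt : Real.sqrt 2 / 2 < c := by
    have := Real.cos_lt_cos_of_nonneg_of_le_pi (x := α/2) (y := π/4)
      (by linarith) (by linarith [pi_pos]) (by linarith)
    rwa [Real.cos_pi_div_four] at this
  have hsc : s < c := hslt.trans hclt
  have hcs : c - s ≠ 0 := sub_ne_zero.mpr hsc.ne'
  have hcos : Real.cos α = 2*c^2 - 1 := by
    have := Real.cos_two_mul (α/2)
    rw [show 2*(α/2) = α by ring] at this
    linarith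
  have hsin : Real.sin α = 2*s*c := by
    have := Real.sin_two_mul (α/2)
    rw [show 2*(α/2) = α by ring] at this
    linarith
  have htan1 : Real.tan (-(1/2)*α + π/2) = c/s := by
    rw [show -(1/2)*α + π/2 = π/2 - α/2 by ring, Real.tan_pi_div_two_sub,
      Real.tan_eq_sin_div_cos, inv_div]
  have htan2 : Real.tan ((1/2)*α + π/4) = (c+s)/(c-s) := by
    have h2p : (0:ℝ) < Real.sqrt 2 := Real.sqrt_pos.mpr (by norm_num)
    rw [show (1/2)*α + π/4 = α/2 + π/4 by ring, Real.tan_eq_sin_div_cos,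
      Real.sin_add, Real.cos_add, Real.sin_pi_div_four, Real.cos_pi_div_four]
    rw [div_eq_div_iff (by nlinarith) (by nlinarith [sub_pos.mpr hsc])]
    ring
  have hden : Real.cos α + Real.sin α - 1 = 2*s*(c-s) := by
    rw [hcos, hsin]; linear_combination 2*hpy
  have hnum : Real.cos α + b = c^2 - s^2 + b*(s^2+c^2) := by
    rw [hcos]; linear_combination (1-b)*hpy
  rw [hden, hnum, htan1, htan2]
  field_simp
  ring

/-- Lemma 6: ψ(α) = (cos α + b)/(cos α + sin α − 1) is convex on (0, π/2). -/
theorem psi_convex (b : ℝ) (hb : 0 < b) :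
    ConvexOn ℝ (Set.Ioo 0 (π / 2))
      (fun α => (Real.cos α + b) / (Real.cos α + Real.sin α - 1)) := by
  have c1 : (0:ℝ) ≤ (1+b)/2 := by linarith
  have c2 : (0:ℝ) ≤ b/2 := by linarith
  have h1 : ConvexOn ℝ (Set.Ioo 0 (π/2)) (fun x => Real.tan (-(1/2)*x + π/2)) := by
    apply convexOn_tan_affine
    rintro x ⟨hx1, hx2⟩
    refine ⟨by nlinarith [pi_pos], by nlinarith [pi_pos]⟩
  have h2 : ConvexOn ℝ (Set.Ioo 0 (π/2)) (fun x => Real.tan ((1/2)*x + π/4)) := by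
    apply convexOn_tan_affine
    rintro x ⟨hx1, hx2⟩
    refine ⟨by nlinarith [pi_pos], by nlinarith [pi_pos]⟩
  have hF : ConvexOn ℝ (Set.Ioo 0 (π/2))
      (fun α => 1/2 + ((1+b)/2) * Real.tan (-(1/2)*α + π/2)
        + (b/2) * Real.tan ((1/2)*α + π/4)) := by
    have := ((convexOn_const (1/2 : ℝ) (convex_Ioo (0:ℝ) (π/2))).add (h1.smul c1)).add
      (h2.smul c2)
    have hfun : (fun α => 1/2 + ((1+b)/2) * Real.tan (-(1/2)*α + π/2)
        + (b/2) * Real.tan ((1/2)*α + π/4))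
        = (((fun _ => (1/2:ℝ)) + fun x => ((1+b)/2) • Real.tan (-(1/2)*x + π/2))
          + fun x => (b/2) • Real.tan ((1/2)*x + π/4)) := by
      funext α
      simp [smul_eq_mul]
    rw [hfun]
    exact this
  have hset : (Set.Ioo (0:ℝ) (π/2)) = (Set.Ioo 0 (π / 2)) := by norm_num
  refine ⟨convex_Ioo _ _, fun x hx y hy a c ha hc hab => ?_⟩
  have hmem : a • x + c • y ∈ Set.Ioo (0:ℝ) (π/2) :=
    (convex_Ioo (0:ℝ) (π/2)) hx hy ha hc hab
  simp only [smul_eq_mul] at *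
  rw [psi_eq b hmem, psi_eq b hx, psi_eq b hy]
  have := hF.2 hx hy ha hc hab
  simpa [smul_eq_mul] using this
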